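/- A string attractor of a string S of length n is a set Γ ⊆ {1,…,n} such that every nonempty substring S[i..j] has an occurrence S[i'..j'] = S[i..j] with some position of Γ in the interval [i', j']. Theorem: if Γ is a string attractor for S over alphabet Σ, and for a symbol c ∈ Σ one defines the binary string S_c by S_c[i] = 1 iff S[i] = c, then Γ is a string attractor for S_c. -/
import Mathlib


/-- `Γ` is a string attractor of `S`: `Γ ⊆ {1,…,|S|}` (1-based positions) and every
nonempty substring of `S` (given by its 0-based start `a` and length `ℓ ≥ 1`) has an
occurrence starting at some 0-based position `a'` that contains a position of `Γ`
(1-based positions `a'+1 … a'+ℓ`). -/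
def IsAttractor {α : Type*} (S : List α) (Γ : Set ℕ) : Prop :=
  (∀ p ∈ Γ, 1 ≤ p ∧ p ≤ S.length) ∧
  ∀ a ℓ : ℕ, 1 ≤ ℓ → a + ℓ ≤ S.length →
    ∃ a', a' + ℓ ≤ S.length ∧ (S.drop a').take ℓ = (S.drop a).take ℓ ∧
      ∃ p ∈ Γ, a' + 1 ≤ p ∧ p ≤ a' + ℓ

theorem stmt8 {α : Type*} [DecidableEq α] (S : List α) (Γ : Set ℕ) (c : α)
    (h : IsAttractor S Γ) :
    IsAttractor (S.map (fun x => decide (x = c))) Γ := by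
  obtain ⟨h1, h2⟩ := h
  constructor
  · simpa using h1
  · intro a ℓ hℓ ha
    rw [List.length_map] at ha
    obtain ⟨a', h1', h2', hp⟩ := h2 a ℓ hℓ ha
    refine ⟨a', by simpa using h1', ?_, hp⟩
    rw [← List.map_drop, ← List.map_drop, ← List.map_take, ← List.map_take, h2']
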